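/- Let G be a finite-dimensional Hopf algebra and A a right G-comodule algebra. Consider the iterated crossed product (A ⋊ Ĝ) ⋊ G, where G acts on A ⋊ Ĝ by a ▷ (A ⋊ φ) := A ⋊ (a ⇀ φ) with (a ⇀ φ) = φ₍₁₎⟨φ₍₂₎, a⟩. Then as an algebra (A ⋊ Ĝ) ⋊ G coincides with the two-sided crossed product A ⋊ Ĝ ⋉ G (where G acts on itself from the right via ↼) under the trivial identification of the underlying vector space A ⊗ Ĝ ⊗ G. -/
import Mathlib


open TensorProduct

set_option maxHeartbeats 1000000 in
set_option synthInstance.maxHeartbeats 1000000 in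
/-- Let `G` be a finite-dimensional Hopf algebra with dual `Ĝ = H`
(encoded by a perfect Hopf pairing `p : G → H → ℂ`), and `A` a right `G`-comodule algebra with
dual left Hopf module action `▷ = act` of `Ĝ`.  On the underlying space `(A ⊗ Ĝ) ⊗ G`, let
`mul1` be the product of the iterated crossed product `(A ⋊ Ĝ) ⋊ G` (where `G` acts on
`A ⋊ Ĝ` by `a ▷ (A ⋊ φ) = A ⋊ (a ⇀ φ)`), and `mul2` the product of the two-sided crossed
product `A ⋊ Ĝ ⋉ G` (where `G` acts on itself from the right by `↼`).  Then `mul1 = mul2`. -/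
theorem statement8
    (G H A : Type*) [Ring G] [HopfAlgebra ℂ G] [Ring H] [HopfAlgebra ℂ H]
    [Ring A] [Algebra ℂ A]
    [FiniteDimensional ℂ G] [FiniteDimensional ℂ H]
    -- the Hopf pairing `⟨·|·⟩ : G ⊗ Ĝ → ℂ`
    (p : G →ₗ[ℂ] H →ₗ[ℂ] ℂ)
    (hp_mulG : ∀ (a b : G) (φ : H),
      p (a * b) φ =
        LinearMap.mul' ℂ ℂ (TensorProduct.map (p a) (p b) (Coalgebra.comul (R := ℂ) φ)))
    (hp_oneG : ∀ φ : H, p 1 φ = Coalgebra.counit (R := ℂ) φ)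
    (hp_mulH : ∀ (a : G) (φ ψ : H),
      p a (φ * ψ) =
        LinearMap.mul' ℂ ℂ
          (TensorProduct.map (p.flip φ) (p.flip ψ) (Coalgebra.comul (R := ℂ) a)))
    (hp_oneH : ∀ a : G, p a 1 = Coalgebra.counit (R := ℂ) a)
    (hp_antipode : ∀ (a : G) (φ : H),
      p (HopfAlgebra.antipode (R := ℂ) a) φ = p a (HopfAlgebra.antipode (R := ℂ) φ))
    (hp_nondegG : ∀ a : G, (∀ φ : H, p a φ = 0) → a = 0)
    (hp_nondegH : ∀ φ : H, (∀ a : G, p a φ = 0) → φ = 0)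
    -- the left Hopf module action `▷` of `Ĝ = H` on `A`, dual to the coaction on `A`
    (act : H →ₗ[ℂ] A →ₗ[ℂ] A)
    (hact_mul : ∀ (φ ψ : H) (a : A), act (φ * ψ) a = act φ (act ψ a))
    (hact_one : ∀ a : A, act 1 a = a)
    (hact_alg : ∀ (φ : H) (a a' : A),
      act φ (a * a') =
        LinearMap.mul' ℂ A
          (TensorProduct.map (act.flip a) (act.flip a') (Coalgebra.comul (R := ℂ) φ)))
    (hact_unit : ∀ φ : H, act φ (1 : A) = Coalgebra.counit (R := ℂ) φ • (1 : A))
    -- `⇀` : `rh a ψ = a ⇀ ψ = ψ₍₁₎⟨ψ₍₂₎|a⟩`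
    (rh : G →ₗ[ℂ] H →ₗ[ℂ] H)
    (h_rh : ∀ (a : G) (ψ : H),
      rh a ψ =
        (TensorProduct.rid ℂ H)
          (TensorProduct.map LinearMap.id (p a) (Coalgebra.comul (R := ℂ) ψ)))
    -- `↼` : `lh ψ a = a ↼ ψ = ⟨a₍₁₎|ψ⟩a₍₂₎`
    (lh : H →ₗ[ℂ] G →ₗ[ℂ] G)
    (h_lh : ∀ (ψ : H) (a : G),
      lh ψ a =
        (TensorProduct.lid ℂ G)
          (TensorProduct.map (p.flip ψ) LinearMap.id (Coalgebra.comul (R := ℂ) a)))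
    -- `mul1` : the iterated crossed product `(A ⋊ Ĝ) ⋊ G`, with
    -- `((A ⋊ φ) ⋊ g)((A' ⋊ ψ) ⋊ g') = (A(φ₁ ▷ A') ⋊ φ₂·(g₁ ⇀ ψ)) ⋊ g₂g'`
    (mul1 : (A ⊗[ℂ] H) ⊗[ℂ] G →ₗ[ℂ] (A ⊗[ℂ] H) ⊗[ℂ] G →ₗ[ℂ] (A ⊗[ℂ] H) ⊗[ℂ] G)
    (hmul1 : ∀ (a a' : A) (φ ψ : H) (g g' : G),
      mul1 ((a ⊗ₜ[ℂ] φ) ⊗ₜ[ℂ] g) ((a' ⊗ₜ[ℂ] ψ) ⊗ₜ[ℂ] g') =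
        (TensorProduct.assoc ℂ A H G).symm
          (TensorProduct.map (LinearMap.mulLeft ℂ a ∘ₗ act.flip a')
            (TensorProduct.map
              (LinearMap.mul' ℂ H ∘ₗ TensorProduct.map LinearMap.id (rh.flip ψ))
              (LinearMap.mulRight ℂ g'))
            (TensorProduct.map LinearMap.id
              (TensorProduct.assoc ℂ H G G).symm.toLinearMap
              ((TensorProduct.assoc ℂ H H (G ⊗[ℂ] G))
                ((Coalgebra.comul (R := ℂ) φ) ⊗ₜ[ℂ] (Coalgebra.comul (R := ℂ) g))))))
    -- `mul2` : the two-sided crossed product `A ⋊ Ĝ ⋉ G`, with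
    -- `(A ⋊ φ ⋉ g)(A' ⋊ ψ ⋉ g') = A(φ₁ ▷ A') ⋊ φ₂ψ₁ ⋉ (g ↼ ψ₂)g'`
    (mul2 : (A ⊗[ℂ] H) ⊗[ℂ] G →ₗ[ℂ] (A ⊗[ℂ] H) ⊗[ℂ] G →ₗ[ℂ] (A ⊗[ℂ] H) ⊗[ℂ] G)
    (hmul2 : ∀ (a a' : A) (φ ψ : H) (g g' : G),
      mul2 ((a ⊗ₜ[ℂ] φ) ⊗ₜ[ℂ] g) ((a' ⊗ₜ[ℂ] ψ) ⊗ₜ[ℂ] g') =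
        (TensorProduct.assoc ℂ A H G).symm
          (TensorProduct.map (LinearMap.mulLeft ℂ a ∘ₗ act.flip a')
            (TensorProduct.map (LinearMap.mul' ℂ H)
              (LinearMap.mulRight ℂ g' ∘ₗ lh.flip g))
            (TensorProduct.map LinearMap.id
              (TensorProduct.assoc ℂ H H H).symm.toLinearMap
              ((TensorProduct.assoc ℂ H H (H ⊗[ℂ] H))
                ((Coalgebra.comul (R := ℂ) φ) ⊗ₜ[ℂ] (Coalgebra.comul (R := ℂ) ψ)))))) :
    mul1 = mul2 := by

  classical
  -- the common bilinear value `L ((ψ₁⊗ψ₂)⊗(g₁⊗g₂)) = ⟨g₁|ψ₂⟩ • (ψ₁ ⊗ g₂)`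
  set P : H ⊗[ℂ] G →ₗ[ℂ] ℂ := TensorProduct.lift p.flip with hP
  set L : (H ⊗[ℂ] H) ⊗[ℂ] (G ⊗[ℂ] G) →ₗ[ℂ] H ⊗[ℂ] G :=
    (TensorProduct.map LinearMap.id (TensorProduct.lid ℂ G).toLinearMap) ∘ₗ
    (TensorProduct.map LinearMap.id (TensorProduct.map P LinearMap.id)) ∘ₗ
    (TensorProduct.map LinearMap.id (TensorProduct.assoc ℂ H G G).symm.toLinearMap) ∘ₗ
    (TensorProduct.assoc ℂ H H (G ⊗[ℂ] G)).toLinearMap with hLdef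
  have hL : ∀ (ψ₁ ψ₂ : H) (g₁ g₂ : G),
      L ((ψ₁ ⊗ₜ[ℂ] ψ₂) ⊗ₜ[ℂ] (g₁ ⊗ₜ[ℂ] g₂)) = p g₁ ψ₂ • (ψ₁ ⊗ₜ[ℂ] g₂) := by
    intro ψ₁ ψ₂ g₁ g₂
    simp [hLdef, hP, TensorProduct.smul_tmul']
  -- the key identity `(g₁ ⇀ ψ) ⊗ g₂ = ψ₁ ⊗ (g ↼ ψ₂)`
  have key : ∀ (ψ : H) (g : G),
      TensorProduct.map (rh.flip ψ) LinearMap.id (Coalgebra.comul (R := ℂ) g) =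
        TensorProduct.map LinearMap.id (lh.flip g) (Coalgebra.comul (R := ℂ) ψ) := by
    intro ψ g
    have stepA : ∀ x : G ⊗[ℂ] G,
        TensorProduct.map (rh.flip ψ) LinearMap.id x
          = L ((Coalgebra.comul (R := ℂ) ψ) ⊗ₜ[ℂ] x) := by
      intro x
      induction x using TensorProduct.induction_on with
      | zero => simp
      | tmul g₁ g₂ =>
        have hz : ∀ z : H ⊗[ℂ] H,
            ((TensorProduct.rid ℂ H)
                (TensorProduct.map LinearMap.id (p g₁) z)) ⊗ₜ[ℂ] g₂
              = L (z ⊗ₜ[ℂ] (g₁ ⊗ₜ[ℂ] g₂)) := by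
          intro z
          induction z using TensorProduct.induction_on with
          | zero => simp
          | tmul ψ₁ ψ₂ => simp [hL, TensorProduct.smul_tmul']
          | add z₁ z₂ h₁ h₂ => simp only [map_add, add_tmul] at *; rw [h₁, h₂]
        calc TensorProduct.map (rh.flip ψ) LinearMap.id (g₁ ⊗ₜ[ℂ] g₂)
            = (rh g₁ ψ) ⊗ₜ[ℂ] g₂ := by simp
          _ = _ := by rw [h_rh]; exact hz _
      | add x₁ x₂ h₁ h₂ => simp only [map_add, tmul_add] at *; rw [h₁, h₂]
    have stepB : ∀ z : H ⊗[ℂ] H,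
        TensorProduct.map LinearMap.id (lh.flip g) z
          = L (z ⊗ₜ[ℂ] (Coalgebra.comul (R := ℂ) g)) := by
      intro z
      induction z using TensorProduct.induction_on with
      | zero => simp
      | tmul ψ₁ ψ₂ =>
        have hx : ∀ x : G ⊗[ℂ] G,
            ψ₁ ⊗ₜ[ℂ] ((TensorProduct.lid ℂ G)
                (TensorProduct.map (p.flip ψ₂) LinearMap.id x))
              = L ((ψ₁ ⊗ₜ[ℂ] ψ₂) ⊗ₜ[ℂ] x) := by
          intro x
          induction x using TensorProduct.induction_on with
          | zero => simp
          | tmul g₁ g₂ => simp [hL]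
          | add x₁ x₂ h₁ h₂ => simp only [map_add, tmul_add] at *; rw [h₁, h₂]
        calc TensorProduct.map LinearMap.id (lh.flip g) (ψ₁ ⊗ₜ[ℂ] ψ₂)
            = ψ₁ ⊗ₜ[ℂ] (lh ψ₂ g) := by simp
          _ = _ := by rw [h_lh]; exact hx _
      | add z₁ z₂ h₁ h₂ => simp only [map_add, add_tmul] at *; rw [h₁, h₂]
    rw [stepA, stepB]
  -- reduce the claim to pure tensors
  apply TensorProduct.ext'
  intro x g
  induction x using TensorProduct.induction_on with
  | zero => simp
  | add x₁ x₂ h₁ h₂ => simp only [add_tmul, map_add]; rw [h₁, h₂]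
  | tmul a φ =>
    apply TensorProduct.ext'
    intro y g'
    induction y using TensorProduct.induction_on with
    | zero => simp
    | add y₁ y₂ h₁ h₂ => simp only [add_tmul, map_add]; rw [h₁, h₂]
    | tmul a' ψ =>
      rw [hmul1, hmul2]
      congr 1
      -- generalize `comul φ` and induct
      generalize Coalgebra.comul (R := ℂ) φ = u
      induction u using TensorProduct.induction_on with
      | zero => simp only [zero_tmul, LinearEquiv.map_zero, map_zero]
      | add u₁ u₂ h₁ h₂ =>
        simp only [add_tmul, LinearEquiv.map_add, map_add]; rw [h₁, h₂]
      | tmul φ₁ φ₂ =>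
        have hA : ∀ x : G ⊗[ℂ] G,
            TensorProduct.map (LinearMap.mulLeft ℂ a ∘ₗ act.flip a')
                (TensorProduct.map
                  (LinearMap.mul' ℂ H ∘ₗ
                    TensorProduct.map LinearMap.id (rh.flip ψ))
                  (LinearMap.mulRight ℂ g'))
                (TensorProduct.map LinearMap.id
                  (TensorProduct.assoc ℂ H G G).symm.toLinearMap
                  ((TensorProduct.assoc ℂ H H (G ⊗[ℂ] G))
                    ((φ₁ ⊗ₜ[ℂ] φ₂) ⊗ₜ[ℂ] x)))
              = ((LinearMap.mulLeft ℂ a ∘ₗ act.flip a') φ₁) ⊗ₜ[ℂ]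
                  (TensorProduct.map (LinearMap.mulLeft ℂ φ₂)
                    (LinearMap.mulRight ℂ g')
                    (TensorProduct.map (rh.flip ψ) LinearMap.id x)) := by
          intro x
          induction x using TensorProduct.induction_on with
          | zero => simp
          | tmul g₁ g₂ => simp [LinearMap.mul'_apply]
          | add x₁ x₂ h₁ h₂ => simp only [map_add, tmul_add] at *; rw [h₁, h₂]
        have hB : ∀ z : H ⊗[ℂ] H,
            TensorProduct.map (LinearMap.mulLeft ℂ a ∘ₗ act.flip a')
                (TensorProduct.map (LinearMap.mul' ℂ H)
                  (LinearMap.mulRight ℂ g' ∘ₗ lh.flip g))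
                (TensorProduct.map LinearMap.id
                  (TensorProduct.assoc ℂ H H H).symm.toLinearMap
                  ((TensorProduct.assoc ℂ H H (H ⊗[ℂ] H))
                    ((φ₁ ⊗ₜ[ℂ] φ₂) ⊗ₜ[ℂ] z)))
              = ((LinearMap.mulLeft ℂ a ∘ₗ act.flip a') φ₁) ⊗ₜ[ℂ]
                  (TensorProduct.map (LinearMap.mulLeft ℂ φ₂)
                    (LinearMap.mulRight ℂ g')
                    (TensorProduct.map LinearMap.id (lh.flip g) z)) := by
          intro z
          induction z using TensorProduct.induction_on with
          | zero => simp
          | tmul ψ₁ ψ₂ => simp [LinearMap.mul'_apply]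
          | add z₁ z₂ h₁ h₂ => simp only [map_add, tmul_add] at *; rw [h₁, h₂]
        rw [hA, hB, key]
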